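/- arXiv:1104.5595 — 2 statements merged into one kernel-verified Lean document; each statement's English description precedes it below -/
import Mathlib

section
/- For every n ≥ 4, in the target group G_D(n), with e_{ij} := (i j)·t_{ij} as above, one has e_{ij}·e_{ik} = e_{jk} for all pairwise distinct indices i, j, k in {1,…,n}. Consequently the subgroup of G_D(n) generated by all the e_{ij} is generated by the n−1 elements e_{12}, e_{13}, …, e_{1n}. -/
open Monoid Pointwise

/-- The type of `k`-element subsets of `Fin n`. -/
abbrev KSub (n k : ℕ) := {s : Finset (Fin n) // s.card = k}

/-- The free product of copies of `ℤ/2ℤ` indexed by the `k`-element subsets of `Fin n`. -/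
abbrev FP (n k : ℕ) := Monoid.CoprodI (fun _ : KSub n k => Multiplicative (ZMod 2))

/-- The symmetric generator `t_S`. -/
def tFP {n k : ℕ} (S : KSub n k) : FP n k :=
  Monoid.CoprodI.of (i := S) (Multiplicative.ofAdd (1 : ZMod 2))

/-- The action of a permutation of `Fin n` on the `k`-element subsets. -/
instance KSub.instMulAction (n k : ℕ) : MulAction (Equiv.Perm (Fin n)) (KSub n k) where
  smul σ S := ⟨σ • S.1, by rw [Finset.card_smul_finset]; exact S.2⟩
  one_smul S := Subtype.ext (one_smul _ S.1)
  mul_smul σ τ S := Subtype.ext (mul_smul σ τ S.1)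

/-- The endomorphism of the free product induced by a permutation of `Fin n`. -/
def fpHom {n k : ℕ} (σ : Equiv.Perm (Fin n)) : FP n k →* FP n k :=
  Monoid.CoprodI.lift (fun S => Monoid.CoprodI.of (M := fun _ : KSub n k => Multiplicative (ZMod 2)) (i := σ • S))

lemma fpHom_comp {n k : ℕ} (σ τ : Equiv.Perm (Fin n)) :
    (fpHom (n := n) (k := k) σ).comp (fpHom τ) = fpHom (σ * τ) := by
  apply Monoid.CoprodI.ext_hom
  intro S
  ext x
  simp [fpHom, Monoid.CoprodI.lift_of, mul_smul]

lemma fpHom_one {n k : ℕ} : fpHom (n := n) (k := k) 1 = MonoidHom.id _ := by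
  apply Monoid.CoprodI.ext_hom
  intro S
  ext x
  simp [fpHom, Monoid.CoprodI.lift_of]

/-- The action of `Sym(Fin n)` on the free product, permuting the free factors. -/
def fpAut (n k : ℕ) : Equiv.Perm (Fin n) →* MulAut (FP n k) :=
  MonoidHom.mk' (fun σ =>
    { toFun := fpHom σ
      invFun := fpHom σ⁻¹
      left_inv := fun x => by
        have h := fpHom_comp (n := n) (k := k) σ⁻¹ σ
        rw [inv_mul_cancel, fpHom_one] at h
        exact DFunLike.congr_fun h x
      right_inv := fun x => by
        have h := fpHom_comp (n := n) (k := k) σ σ⁻¹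
        rw [mul_inv_cancel, fpHom_one] at h
        exact DFunLike.congr_fun h x
      map_mul' := map_mul _ })
    (fun σ τ => by
      ext x
      exact (DFunLike.congr_fun (fpHom_comp (n := n) (k := k) σ τ) x).symm)

/-- The progenitor `2^{⋆C(n,k)} : Sₙ`. -/
abbrev Progenitor (n k : ℕ) := FP n k ⋊[fpAut n k] Equiv.Perm (Fin n)

/-- The target group: the quotient of the progenitor by the normal closure of the
single relator `(t_{S₀}·σ₀)³`. -/
abbrev TargetGroup (n k : ℕ) (S₀ : KSub n k) (σ₀ : Equiv.Perm (Fin n)) :=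
  Progenitor n k ⧸ Subgroup.normalClosure
    {(SemidirectProduct.inl (tFP S₀) * SemidirectProduct.inr σ₀) ^ 3}

/-- The image in the target group of the symmetric generator `t_S`. -/
def tbar {n k : ℕ} (S₀ : KSub n k) (σ₀ : Equiv.Perm (Fin n)) (S : KSub n k) :
    TargetGroup n k S₀ σ₀ :=
  QuotientGroup.mk (SemidirectProduct.inl (tFP S))

/-- The canonical map from the control group `Sₙ` to the target group. -/
def pbar {n k : ℕ} (S₀ : KSub n k) (σ₀ : Equiv.Perm (Fin n)) :
    Equiv.Perm (Fin n) →* TargetGroup n k S₀ σ₀ :=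
  (QuotientGroup.mk' _).comp (SemidirectProduct.inr)

/-- The subset `{1, 2}` (0-based: `{0, 1}`) of `Fin n`. -/
def S12 (n : ℕ) (hn : 4 ≤ n) : KSub n 2 :=
  ⟨{⟨0, by omega⟩, ⟨1, by omega⟩}, Finset.card_pair (by simp [Fin.ext_iff])⟩

/-- The transposition `(2 3)` (0-based: `(1 2)`) of `Fin n`. -/
def σD (n : ℕ) (hn : 4 ≤ n) : Equiv.Perm (Fin n) :=
  Equiv.swap ⟨1, by omega⟩ ⟨2, by omega⟩

/-- The target group `G_D(n)`, obtained by factoring the progenitor `2^{⋆C(n,2)} : Sₙ`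
by the single relator `(t_{12}·(2 3))³`. -/
abbrev GD (n : ℕ) (hn : 4 ≤ n) := TargetGroup n 2 (S12 n hn) (σD n hn)

/-- The symmetric generator `t_{ij}` of `G_D(n)`. -/
def tD {n : ℕ} (hn : 4 ≤ n) (i j : Fin n) (h : i ≠ j) : GD n hn :=
  tbar (S12 n hn) (σD n hn) ⟨{i, j}, Finset.card_pair h⟩

/-- The canonical map from the control group `Sₙ` to `G_D(n)`. -/
def pD {n : ℕ} (hn : 4 ≤ n) : Equiv.Perm (Fin n) →* GD n hn :=
  pbar (S12 n hn) (σD n hn)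

/-- The element `e_{ij} := (i j)·t_{ij}` of `G_D(n)`. -/
def eD {n : ℕ} (hn : 4 ≤ n) (i j : Fin n) (h : i ≠ j) : GD n hn :=
  pD hn (Equiv.swap i j) * tD hn i j h

section AuxProof

variable {n : ℕ}

lemma tFP_mul_self (S : KSub n 2) : tFP S * tFP S = 1 := by
  rw [tFP, ← map_mul]
  have h : (Multiplicative.ofAdd (1 : ZMod 2)) * (Multiplicative.ofAdd (1 : ZMod 2)) = 1 := by
    decide
  rw [h, map_one]

lemma tD_sq (hn : 4 ≤ n) {i j : Fin n} (h : i ≠ j) :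
    tD hn i j h * tD hn i j h = 1 := by
  show QuotientGroup.mk _ * QuotientGroup.mk _ = 1
  rw [← QuotientGroup.mk_mul, ← map_mul, tFP_mul_self, map_one, QuotientGroup.mk_one]

lemma tD_congr (hn : 4 ≤ n) {i j i' j' : Fin n} (h : i ≠ j) (h' : i' ≠ j')
    (hi : i = i') (hj : j = j') : tD hn i j h = tD hn i' j' h' := by
  subst hi; subst hj; rfl

lemma fpHom_tFP (σ : Equiv.Perm (Fin n)) (S : KSub n 2) :
    fpHom σ (tFP S) = tFP (σ • S) := by
  simp only [tFP, fpHom, Monoid.CoprodI.lift_of]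

lemma KSub_smul_pair (π : Equiv.Perm (Fin n)) {i j : Fin n} (h : i ≠ j) :
    π • (⟨{i, j}, Finset.card_pair h⟩ : KSub n 2) =
      ⟨{π i, π j}, Finset.card_pair (fun e => h (π.injective e))⟩ := by
  apply Subtype.ext
  show π • ({i, j} : Finset (Fin n)) = {π i, π j}
  simp [Finset.smul_finset_insert, Finset.smul_finset_singleton, Equiv.Perm.smul_def]

lemma pD_conj (hn : 4 ≤ n) (π : Equiv.Perm (Fin n)) {i j : Fin n} (h : i ≠ j) :
    pD hn π * tD hn i j h * (pD hn π)⁻¹ =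
      tD hn (π i) (π j) (fun e => h (π.injective e)) := by
  show QuotientGroup.mk _ * QuotientGroup.mk _ * (QuotientGroup.mk _)⁻¹ = QuotientGroup.mk _
  rw [← QuotientGroup.mk_inv, ← QuotientGroup.mk_mul, ← QuotientGroup.mk_mul]
  congr 1
  rw [show (SemidirectProduct.inr π : Progenitor n 2)⁻¹ = SemidirectProduct.inr π⁻¹ from
    (map_inv _ _).symm, ← SemidirectProduct.inl_aut]
  congr 1
  show fpHom π (tFP _) = tFP _
  rw [fpHom_tFP, KSub_smul_pair π h]

lemma pD_swap_sq (hn : 4 ≤ n) (i j : Fin n) :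
    pD hn (Equiv.swap i j) * pD hn (Equiv.swap i j) = 1 := by
  rw [← map_mul, Equiv.swap_mul_self, map_one]

lemma relD_base (hn : 4 ≤ n) (h01 : (⟨0, by omega⟩ : Fin n) ≠ ⟨1, by omega⟩) :
    (tD hn ⟨0, by omega⟩ ⟨1, by omega⟩ h01 * pD hn (σD n hn)) ^ 3 = 1 := by
  show (QuotientGroup.mk _ * QuotientGroup.mk _) ^ 3 = 1
  rw [← QuotientGroup.mk_mul, ← QuotientGroup.mk_pow, QuotientGroup.eq_one_iff]
  exact Subgroup.subset_normalClosure rfl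

lemma exists_perm (hn : 4 ≤ n) (a b c : Fin n) (hab : a ≠ b) (hac : a ≠ c) (hbc : b ≠ c) :
    ∃ π : Equiv.Perm (Fin n),
      π ⟨0, by omega⟩ = a ∧ π ⟨1, by omega⟩ = b ∧ π ⟨2, by omega⟩ = c := by
  set z0 : Fin n := ⟨0, by omega⟩ with hz0
  set z1 : Fin n := ⟨1, by omega⟩ with hz1
  set z2 : Fin n := ⟨2, by omega⟩ with hz2
  have h01 : z0 ≠ z1 := by simp [hz0, hz1, Fin.ext_iff]
  have h02 : z0 ≠ z2 := by simp [hz0, hz2, Fin.ext_iff]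
  have h12 : z1 ≠ z2 := by simp [hz1, hz2, Fin.ext_iff]
  set b' : Fin n := Equiv.swap z0 a b with hb'
  set c' : Fin n := Equiv.swap z1 b' (Equiv.swap z0 a c) with hc'
  have hb'0 : b' ≠ z0 := by
    intro e
    apply hab
    have h2 := congrArg (Equiv.swap z0 a) e
    rw [hb', Equiv.swap_apply_self, Equiv.swap_apply_left] at h2
    exact h2.symm
  have hc'0 : c' ≠ z0 := by
    intro e
    apply hac
    have h2 := congrArg (Equiv.swap z1 b') e
    rw [hc', Equiv.swap_apply_self, Equiv.swap_apply_of_ne_of_ne h01 (Ne.symm hb'0)] at h2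
    have h3 := congrArg (Equiv.swap z0 a) h2
    rw [Equiv.swap_apply_self, Equiv.swap_apply_left] at h3
    exact h3.symm
  have hc'1 : c' ≠ z1 := by
    intro e
    apply hbc
    have h2 := congrArg (Equiv.swap z1 b') e
    rw [hc', Equiv.swap_apply_self, Equiv.swap_apply_left, hb'] at h2
    exact (Equiv.injective _ h2).symm
  refine ⟨Equiv.swap z0 a * Equiv.swap z1 b' * Equiv.swap z2 c', ?_, ?_, ?_⟩
  · simp only [Equiv.Perm.mul_apply]
    rw [Equiv.swap_apply_of_ne_of_ne h02 (Ne.symm hc'0),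
      Equiv.swap_apply_of_ne_of_ne h01 (Ne.symm hb'0), Equiv.swap_apply_left]
  · simp only [Equiv.Perm.mul_apply]
    rw [Equiv.swap_apply_of_ne_of_ne h12 (Ne.symm hc'1), Equiv.swap_apply_left, hb',
      Equiv.swap_apply_self]
  · simp only [Equiv.Perm.mul_apply]
    rw [Equiv.swap_apply_left, hc', Equiv.swap_apply_self, Equiv.swap_apply_self]

lemma relD_rel (hn : 4 ≤ n) {a b c : Fin n} (hab : a ≠ b) (hac : a ≠ c) (hbc : b ≠ c) :
    (tD hn a b hab * pD hn (Equiv.swap b c)) ^ 3 = 1 := by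
  obtain ⟨π, h0, h1, h2⟩ := exists_perm hn a b c hab hac hbc
  have h01 : (⟨0, by omega⟩ : Fin n) ≠ ⟨1, by omega⟩ := by simp [Fin.ext_iff]
  have base := relD_base hn h01
  have key : pD hn π * (tD hn ⟨0, by omega⟩ ⟨1, by omega⟩ h01 * pD hn (σD n hn)) * (pD hn π)⁻¹ =
      tD hn a b hab * pD hn (Equiv.swap b c) := by
    have k1 : pD hn π * tD hn ⟨0, by omega⟩ ⟨1, by omega⟩ h01 * (pD hn π)⁻¹ =
        tD hn a b hab := by
      rw [pD_conj hn π h01]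
      exact tD_congr hn _ hab h0 h1
    have k2 : pD hn π * pD hn (σD n hn) * (pD hn π)⁻¹ = pD hn (Equiv.swap b c) := by
      rw [← map_inv, ← map_mul, ← map_mul]
      congr 1
      rw [← h1, ← h2]
      exact (Equiv.swap_apply_apply π _ _).symm
    rw [← k1, ← k2]
    group
  calc (tD hn a b hab * pD hn (Equiv.swap b c)) ^ 3
      = (pD hn π * (tD hn ⟨0, by omega⟩ ⟨1, by omega⟩ h01 * pD hn (σD n hn)) * (pD hn π)⁻¹) ^ 3 := by
        rw [key]
    _ = pD hn π * (tD hn ⟨0, by omega⟩ ⟨1, by omega⟩ h01 * pD hn (σD n hn)) ^ 3 * (pD hn π)⁻¹ := by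
        simp [pow_succ, mul_assoc]
    _ = 1 := by rw [base, mul_one, mul_inv_cancel]

lemma relD (hn : 4 ≤ n) {a b c : Fin n} (hab : a ≠ b) (hac : a ≠ c) (hbc : b ≠ c) :
    tD hn a b hab * tD hn a c hac * tD hn a b hab = pD hn (Equiv.swap b c) := by
  have h3 := relD_rel hn hab hac hbc
  have hp : pD hn (Equiv.swap b c) * pD hn (Equiv.swap b c) = 1 := pD_swap_sq hn b c
  have hpinv : (pD hn (Equiv.swap b c))⁻¹ = pD hn (Equiv.swap b c) :=
    (eq_inv_of_mul_eq_one_left hp).symm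
  have hc2 : pD hn (Equiv.swap b c) * tD hn a b hab * (pD hn (Equiv.swap b c))⁻¹ =
      tD hn a c hac := by
    rw [pD_conj hn _ hab]
    exact tD_congr hn _ hac (Equiv.swap_apply_of_ne_of_ne hab hac) (Equiv.swap_apply_left b c)
  have key : tD hn a b hab * tD hn a c hac * tD hn a b hab * pD hn (Equiv.swap b c) =
      (tD hn a b hab * pD hn (Equiv.swap b c)) ^ 3 := by
    rw [← hc2, hpinv]
    simp [pow_succ, mul_assoc]
  have k1 : tD hn a b hab * tD hn a c hac * tD hn a b hab * pD hn (Equiv.swap b c) = 1 :=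
    key.trans h3
  have k2 := mul_eq_one_iff_eq_inv.mp k1
  rw [hpinv] at k2
  exact k2

lemma swap_prod {α : Type*} [DecidableEq α] {i j k : α} (hij : i ≠ j) (hik : i ≠ k)
    (hjk : j ≠ k) :
    Equiv.swap i j * Equiv.swap i k = Equiv.swap j k * Equiv.swap i j := by
  ext x
  simp only [Equiv.Perm.mul_apply, Equiv.swap_apply_def]
  split_ifs <;> simp_all

lemma tD_comm (hn : 4 ≤ n) {i j : Fin n} (h : i ≠ j) :
    tD hn i j h = tD hn j i h.symm := by
  unfold tD
  congr 1
  exact Subtype.ext (Finset.pair_comm i j)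

lemma eD_comm (hn : 4 ≤ n) {i j : Fin n} (h : i ≠ j) :
    eD hn i j h = eD hn j i h.symm := by
  unfold eD
  rw [Equiv.swap_comm, tD_comm]

lemma eD_mul (hn : 4 ≤ n) (i j k : Fin n) (hij : i ≠ j) (hik : i ≠ k) (hjk : j ≠ k) :
    eD hn i j hij * eD hn i k hik = eD hn j k hjk := by
  have hTij : pD hn (Equiv.swap i k) * tD hn k j hjk.symm * (pD hn (Equiv.swap i k))⁻¹ =
      tD hn i j hij := by
    rw [pD_conj hn _ hjk.symm]
    exact tD_congr hn _ hij (Equiv.swap_apply_right i k)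
      (Equiv.swap_apply_of_ne_of_ne (Ne.symm hij) hjk)
  have hrel : tD hn k j hjk.symm * tD hn k i hik.symm * tD hn k j hjk.symm =
      pD hn (Equiv.swap j i) := relD hn hjk.symm hik.symm hij.symm
  have hP1 : pD hn (Equiv.swap i j) =
      tD hn k j hjk.symm * tD hn k i hik.symm * tD hn k j hjk.symm := by
    rw [Equiv.swap_comm i j, ← hrel]
  have e2 : pD hn (Equiv.swap i j) * pD hn (Equiv.swap i k) =
      pD hn (Equiv.swap j k) * pD hn (Equiv.swap i j) := by
    rw [← map_mul, ← map_mul, swap_prod hij hik hjk]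
  unfold eD
  rw [← hTij, tD_comm hn hik, tD_comm hn hjk]
  have step : pD hn (Equiv.swap i j) *
        (pD hn (Equiv.swap i k) * tD hn k j hjk.symm * (pD hn (Equiv.swap i k))⁻¹) *
        (pD hn (Equiv.swap i k) * tD hn k i hik.symm) =
      pD hn (Equiv.swap i j) * pD hn (Equiv.swap i k) *
        (tD hn k j hjk.symm * tD hn k i hik.symm) := by group
  rw [step, e2, mul_assoc]
  congr 1
  rw [hP1]
  have hA := tD_sq hn hjk.symm
  have hB := tD_sq hn hik.symm
  calc tD hn k j hjk.symm * tD hn k i hik.symm * tD hn k j hjk.symm *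
        (tD hn k j hjk.symm * tD hn k i hik.symm)
      = tD hn k j hjk.symm * (tD hn k i hik.symm *
          ((tD hn k j hjk.symm * tD hn k j hjk.symm) * tD hn k i hik.symm)) := by group
    _ = tD hn k j hjk.symm := by rw [hA, one_mul, hB, mul_one]

end AuxProof


/-- For every `n ≥ 4`, in `G_D(n)` one has `e_{ij}·e_{ik} = e_{jk}` for
pairwise distinct `i, j, k`; consequently the subgroup generated by all the `e_{ij}` is
generated by the `n − 1` elements `e_{12}, e_{13}, …, e_{1n}` (0-based: `e_{0j}`, `j ≠ 0`). -/
theorem targetGroup_D_e_mul (n : ℕ) (hn : 4 ≤ n) :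
    (∀ (i j k : Fin n) (hij : i ≠ j) (hik : i ≠ k) (hjk : j ≠ k),
        eD hn i j hij * eD hn i k hik = eD hn j k hjk) ∧
      Subgroup.closure {x : GD n hn | ∃ (i j : Fin n) (h : i ≠ j), x = eD hn i j h} =
        Subgroup.closure
          {x : GD n hn | ∃ (j : Fin n) (h : (⟨0, by omega⟩ : Fin n) ≠ j),
            x = eD hn ⟨0, by omega⟩ j h} := by
  constructor
  · exact fun i j k hij hik hjk => eD_mul hn i j k hij hik hjk
  · apply le_antisymm
    · rw [Subgroup.closure_le]
      rintro x ⟨i, j, h, rfl⟩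
      by_cases hi : i = (⟨0, by omega⟩ : Fin n)
      · subst hi
        exact Subgroup.subset_closure ⟨j, h, rfl⟩
      · by_cases hj : j = (⟨0, by omega⟩ : Fin n)
        · subst hj
          rw [eD_comm hn h]
          exact Subgroup.subset_closure ⟨i, h.symm, rfl⟩
        · have h0i : (⟨0, by omega⟩ : Fin n) ≠ i := fun e => hi e.symm
          have h0j : (⟨0, by omega⟩ : Fin n) ≠ j := fun e => hj e.symm
          rw [← eD_mul hn _ i j h0i h0j h]
          exact mul_mem (Subgroup.subset_closure ⟨i, h0i, rfl⟩)
            (Subgroup.subset_closure ⟨j, h0j, rfl⟩)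
    · rw [Subgroup.closure_le]
      rintro x ⟨j, h, rfl⟩
      exact Subgroup.subset_closure ⟨_, j, h, rfl⟩
end

section
/- Let M̄ be the 6×6 matrix over the field ℤ/2ℤ with block form M̄ = [[I₃, J₃], [0₃, I₃]], where I₃ is the 3×3 identity matrix, J₃ the 3×3 all-ones matrix and 0₃ the 3×3 zero matrix, and let H be the subgroup of GL(6, ℤ/2ℤ) generated by M̄ together with all 6×6 permutation matrices. Then every element g of H preserves the quadratic form Q(x) = ∑_{i<j} x_i x_j on (ℤ/2ℤ)⁶: for all g ∈ H and all vectors x ∈ (Fin 6 → ℤ/2ℤ), Q(g·x) = Q(x), where g·x denotes the matrix–vector product. -/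
/-- The 6×6 matrix over `ℤ/2ℤ` with block form `[[I₃, J₃], [0₃, I₃]]`. -/
def MbarE6 : Matrix (Fin 6) (Fin 6) (ZMod 2) :=
  Matrix.reindex finSumFinEquiv finSumFinEquiv
    (Matrix.fromBlocks
      (1 : Matrix (Fin 3) (Fin 3) (ZMod 2))
      (Matrix.of fun _ _ : Fin 3 => (1 : ZMod 2))
      (0 : Matrix (Fin 3) (Fin 3) (ZMod 2)) (1 : Matrix (Fin 3) (Fin 3) (ZMod 2)))

/-- The subgroup of `GL(6, ℤ/2ℤ)` generated by `MbarE6` together with all permutation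
matrices. -/
def HbarE6 : Subgroup (GL (Fin 6) (ZMod 2)) :=
  Subgroup.closure
    {g : GL (Fin 6) (ZMod 2) | (g : Matrix (Fin 6) (Fin 6) (ZMod 2)) = MbarE6 ∨
      ∃ σ : Equiv.Perm (Fin 6), (g : Matrix (Fin 6) (Fin 6) (ZMod 2)) = σ.permMatrix (ZMod 2)}

/-- The quadratic form `Q(x) = ∑_{i<j} x_i x_j` on `(ℤ/2ℤ)⁶`. -/
def QE6 (x : Fin 6 → ZMod 2) : ZMod 2 :=
  ∑ i : Fin 6, ∑ j ∈ Finset.Ioi i, x i * x j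

lemma QE6_pairs (x : Fin 6 → ZMod 2) :
    QE6 x = ∑ p ∈ (Finset.univ : Finset (Fin 6 × Fin 6)).filter (fun p => p.1 < p.2),
      x p.1 * x p.2 := by
  rw [Finset.sum_filter, QE6, Fintype.sum_prod_type]
  refine Finset.sum_congr rfl fun i _ => ?_
  rw [Finset.sum_ite, Finset.sum_const_zero, add_zero]
  refine Finset.sum_congr ?_ fun _ _ => rfl
  ext j; simp

lemma QE6_comp (σ : Equiv.Perm (Fin 6)) (x : Fin 6 → ZMod 2) : QE6 (x ∘ σ) = QE6 x := by
  rw [QE6_pairs, QE6_pairs]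
  refine Finset.sum_nbij' (fun p => if σ p.1 < σ p.2 then (σ p.1, σ p.2) else (σ p.2, σ p.1))
    (fun p => if σ⁻¹ p.1 < σ⁻¹ p.2 then (σ⁻¹ p.1, σ⁻¹ p.2) else (σ⁻¹ p.2, σ⁻¹ p.1))
    ?_ ?_ ?_ ?_ ?_ <;> intro p hp <;>
    simp only [Finset.mem_filter, Finset.mem_univ, true_and] at *
  · rcases lt_or_ge (σ p.1) (σ p.2) with h | h
    · simp [h]
    · have h2 : σ p.2 < σ p.1 := h.lt_of_ne fun e => hp.ne' (σ.injective e)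
      simp [h.not_gt, h2]
  · rcases lt_or_ge (σ⁻¹ p.1) (σ⁻¹ p.2) with h | h
    · simp only [Equiv.Perm.inv_def] at h; simp [h]
    · have h2 : σ⁻¹ p.2 < σ⁻¹ p.1 := h.lt_of_ne fun e => hp.ne' (σ⁻¹.injective e)
      simp only [Equiv.Perm.inv_def] at h h2; simp [h.not_gt, h2]
  · rcases lt_or_ge (σ p.1) (σ p.2) with h | h
    · simp [h, hp]
    · simp [h.not_gt, hp.not_gt, hp.le.not_gt]
  · rcases lt_or_ge (σ⁻¹ p.1) (σ⁻¹ p.2) with h | h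
    · simp only [Equiv.Perm.inv_def] at h; simp [h, hp]
    · simp only [Equiv.Perm.inv_def] at h; simp [h.not_gt, hp.not_gt, hp.le.not_gt]
  · rcases lt_or_ge (σ p.1) (σ p.2) with h | h
    · simp [h]
    · simp [h.not_gt, mul_comm]

lemma permMatrix_mulVec (σ : Equiv.Perm (Fin 6)) (x : Fin 6 → ZMod 2) :
    (σ.permMatrix (ZMod 2)).mulVec x = x ∘ σ := by
  ext i
  simp [Matrix.mulVec, dotProduct, PEquiv.toMatrix_apply, Equiv.toPEquiv_apply]

lemma QE6_Mbar : ∀ x : Fin 6 → ZMod 2, QE6 (MbarE6.mulVec x) = QE6 x := by decide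


/-- Every element of the subgroup of `GL(6, ℤ/2ℤ)` generated by
`M̄ = [[I₃, J₃], [0₃, I₃]]` together with all `6×6` permutation matrices preserves the
quadratic form `Q(x) = ∑_{i<j} x_i x_j` on `(ℤ/2ℤ)⁶`. -/
theorem matrixGroup_E6_mod2_preserves_quadraticForm :
    ∀ g ∈ HbarE6, ∀ x : Fin 6 → ZMod 2,
      QE6 ((g : Matrix (Fin 6) (Fin 6) (ZMod 2)).mulVec x) = QE6 x := by
  set K : Subgroup (GL (Fin 6) (ZMod 2)) :=
    { carrier := {g | ∀ x : Fin 6 → ZMod 2,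
        QE6 ((g : Matrix (Fin 6) (Fin 6) (ZMod 2)).mulVec x) = QE6 x}
      one_mem' := by intro x; simp
      mul_mem' := by
        intro a b ha hb x
        simp only [Units.val_mul, ← Matrix.mulVec_mulVec]
        rw [ha, hb]
      inv_mem' := by
        intro g hg x
        have := hg ((g⁻¹ : GL (Fin 6) (ZMod 2)).1.mulVec x)
        rw [Matrix.mulVec_mulVec, ← Units.val_mul, mul_inv_cancel, Units.val_one,
          Matrix.one_mulVec] at this
        exact this.symm } with hK
  have : HbarE6 ≤ K := by
    rw [HbarE6]
    refine (Subgroup.closure_le K).mpr ?_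
    rintro g (hg | ⟨σ, hσ⟩)
    · intro x; rw [hg]; exact QE6_Mbar x
    · intro x; rw [hσ, permMatrix_mulVec, QE6_comp]
  exact fun g hg => this hg
end
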